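/- Assume λ_min(W) > L/2, so that W is symmetric positive definite. Then the operator T_G is firmly nonexpansive with respect to W: for all x, y ∈ ℝ^{m₁+m₂}, ‖T_G(x) − T_G(y)‖²_W ≤ ⟨T_G(x) − T_G(y), x − y⟩_W. In particular, T_G is ½-averaged nonexpansive with respect to W. -/

import Mathlib

noncomputable section

open scoped BigOperators

/-- `ℝ^n` with the Euclidean structure. -/
abbrev Euc (n : ℕ) := EuclideanSpace ℝ (Fin n)

/-- Matrix–vector multiplication, landing in Euclidean space. -/
def mVec {p q : ℕ} (A : Matrix (Fin p) (Fin q) ℝ) (v : Euc q) : Euc p :=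
  WithLp.toLp 2 (fun i => ∑ j, A i j * v j)

/-- The set of proximity points of an extended-real-valued function `ψ` at `x`:
`prox_ψ(x) = argmin_u {½‖u−x‖² + ψ(u)}`. -/
def proxSet {n : ℕ} (ψ : Euc n → EReal) (x : Euc n) : Set (Euc n) :=
  {p | ∀ u : Euc n,
    ((1 / 2 * ‖p - x‖ ^ 2 : ℝ) : EReal) + ψ p ≤ ((1 / 2 * ‖u - x‖ ^ 2 : ℝ) : EReal) + ψ u}

/-- The indicator function `ι_d` of the set `{x | x ≥ d}` (componentwise). -/
def iotaInd {n : ℕ} (d : Euc n) : Euc n → EReal :=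
  fun y => if ∀ i, d i ≤ y i then (0 : EReal) else ⊤

/-- The convex (Fenchel) conjugate `ψ*(x) = sup_u {⟨x,u⟩ − ψ(u)}`. -/
def conjFn {n : ℕ} (ψ : Euc n → EReal) : Euc n → EReal :=
  fun x => ⨆ u : Euc n, (((inner ℝ x u : ℝ) : EReal) - ψ u)


/-- The block operator `W = P⁻¹G = [[(1/β)I, −Dᵀ],[−D, (1/η)I]]` on `ℝ^{m₁} × ℝ^{m₂}`. -/
def Wapp {m₁ m₂ : ℕ} (β η : ℝ) (D : Matrix (Fin m₂) (Fin m₁) ℝ)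
    (z : Euc m₁ × Euc m₂) : Euc m₁ × Euc m₂ :=
  ((1 / β) • z.1 - mVec D.transpose z.2, -(mVec D z.1) + (1 / η) • z.2)

/-- The bilinear form `⟨z, Ww⟩` associated with `W`. -/
def ipW {m₁ m₂ : ℕ} (β η : ℝ) (D : Matrix (Fin m₂) (Fin m₁) ℝ)
    (z w : Euc m₁ × Euc m₂) : ℝ :=
  (inner ℝ z.1 (Wapp β η D w).1 : ℝ) + (inner ℝ z.2 (Wapp β η D w).2 : ℝ)

/-- The `W`-weighted norm `‖z‖_W = ⟨z, Wz⟩^{1/2}`. -/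
def normW {m₁ m₂ : ℕ} (β η : ℝ) (D : Matrix (Fin m₂) (Fin m₁) ℝ)
    (z : Euc m₁ × Euc m₂) : ℝ :=
  Real.sqrt (ipW β η D z z)


section Helpers

lemma mVec_sub' {p q : ℕ} (A : Matrix (Fin p) (Fin q) ℝ) (a b : Euc q) :
    mVec A (a - b) = mVec A a - mVec A b := by
  ext i
  simp [mVec, mul_sub, Finset.sum_sub_distrib]

lemma mVec_adj' {p q : ℕ} (A : Matrix (Fin p) (Fin q) ℝ) (a : Euc q) (b : Euc p) :
    (inner ℝ a (mVec A.transpose b) : ℝ) = inner ℝ (mVec A a) b := by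
  simp only [PiLp.inner_apply, RCLike.inner_apply, starRingEnd_apply, star_trivial, mVec, PiLp.toLp_apply,
    Matrix.transpose_apply, Finset.mul_sum, Finset.sum_mul]
  rw [Finset.sum_comm]
  congr 1; funext i; congr 1; funext j; ring

lemma limit_aux' {a b c : ℝ} (hc : 0 ≤ c) (h : ∀ t : ℝ, 0 < t → t ≤ 1 → a ≤ b + t * c) :
    a ≤ b := by
  refine le_of_forall_pos_le_add fun ε hε => ?_
  rcases eq_or_lt_of_le hc with hc0 | hc0
  · have := h 1 one_pos le_rfl
    simpa [← hc0] using this.trans (by linarith)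
  · have ht0 : 0 < min 1 (ε / c) := lt_min one_pos (div_pos hε hc0)
    have := h _ ht0 (min_le_left _ _)
    refine this.trans ?_
    have : min 1 (ε / c) * c ≤ (ε / c) * c :=
      mul_le_mul_of_nonneg_right (min_le_right _ _) hc
    rw [div_mul_cancel₀ _ hc0.ne'] at this
    linarith

lemma prox_subgrad' {n : ℕ} (ψ : Euc n → EReal) (x p u : Euc n) (a b : ℝ)
    (hp : p ∈ proxSet ψ x) (ha : ψ p = (a : EReal))
    (hconv : ∀ t : ℝ, 0 < t → t ≤ 1 →
      ψ ((1 - t) • p + t • u) ≤ (((1 - t) * a + t * b : ℝ) : EReal)) :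
    a + (inner ℝ (x - p) (u - p) : ℝ) ≤ b := by
  have key : ∀ t : ℝ, 0 < t → t ≤ 1 →
      a + (inner ℝ (x - p) (u - p) : ℝ) ≤ b + t * (1 / 2 * ‖u - p‖ ^ 2) := by
    intro t ht0 ht1
    set v := (1 - t) • p + t • u with hv
    have h1 := hp v
    rw [ha] at h1
    have h2 : ((1 / 2 * ‖v - x‖ ^ 2 : ℝ) : EReal) + ψ v
        ≤ ((1 / 2 * ‖v - x‖ ^ 2 : ℝ) : EReal) + (((1 - t) * a + t * b : ℝ) : EReal) :=
      add_le_add_right (hconv t ht0 ht1) _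
    have h3 := h1.trans h2
    rw [← EReal.coe_add, ← EReal.coe_add, EReal.coe_le_coe_iff] at h3
    have hvx : v - x = (p - x) + t • (u - p) := by
      rw [hv]; module
    have hnorm : ‖v - x‖ ^ 2
        = ‖p - x‖ ^ 2 + 2 * t * (inner ℝ (p - x) (u - p) : ℝ) + t ^ 2 * ‖u - p‖ ^ 2 := by
      rw [hvx, norm_add_sq_real, real_inner_smul_right, norm_smul, Real.norm_eq_abs]
      rw [mul_pow, sq_abs]
      ring
    rw [hnorm] at h3
    have hip : (inner ℝ (x - p) (u - p) : ℝ) = -(inner ℝ (p - x) (u - p) : ℝ) := by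
      rw [← inner_neg_left]; congr 1; abel
    have h4 : t * (a + (inner ℝ (x - p) (u - p) : ℝ))
        ≤ t * (b + t * (1 / 2 * ‖u - p‖ ^ 2)) := by
      rw [hip]; nlinarith [h3]
    exact le_of_mul_le_mul_left h4 ht0
  exact limit_aux' (by positivity) key

lemma firm_of_subgrad' {n : ℕ} (x x' p p' : Euc n)
    (h1 : (inner ℝ (x - p) (p' - p) : ℝ) + (inner ℝ (x' - p') (p - p') : ℝ) ≤ 0) :
    (inner ℝ (p - p') (p - p') : ℝ) ≤ inner ℝ (p - p') (x - x') := by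
  have e0 : (inner ℝ (x - p) (p' - p) : ℝ) = -(inner ℝ (x - p) (p - p') : ℝ) := by
    rw [← inner_neg_right]; congr 1; abel
  rw [e0] at h1
  have e1 : x - x' = (x - p) + (p - p') - (x' - p') := by abel
  have e2 : (inner ℝ (p - p') ((x - p) + (p - p') - (x' - p')) : ℝ)
      = (inner ℝ (p - p') (x - p) : ℝ) + (inner ℝ (p - p') (p - p') : ℝ)
        - (inner ℝ (p - p') (x' - p') : ℝ) := by
    rw [inner_sub_right, inner_add_right]
  have c1 : (inner ℝ (p - p') (x - p) : ℝ) = inner ℝ (x - p) (p - p') := real_inner_comm _ _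
  have c2 : (inner ℝ (p - p') (x' - p') : ℝ) = inner ℝ (x' - p') (p - p') := real_inner_comm _ _
  rw [e1, e2]
  linarith

lemma conj_lb' {n : ℕ} (d u : Euc n) :
    ((inner ℝ u d : ℝ) : EReal) ≤ conjFn (iotaInd d) u := by
  have := le_iSup (fun v : Euc n => ((inner ℝ u v : ℝ) : EReal) - iotaInd d v) d
  simpa [iotaInd, conjFn] using this

lemma conj_ne_bot' {n : ℕ} (d u : Euc n) : conjFn (iotaInd d) u ≠ ⊥ :=
  fun h => by simpa [h] using conj_lb' d u

lemma conj_zero' {n : ℕ} (d : Euc n) : conjFn (iotaInd d) 0 = 0 := by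
  refine le_antisymm (iSup_le fun u => ?_) (by simpa using conj_lb' d 0)
  by_cases h : ∀ i, d i ≤ u i
  · simp [iotaInd, h, inner_zero_left]
  · simp [iotaInd, h, EReal.sub_top]

lemma conj_term_le' {n : ℕ} (d : Euc n) {q : Euc n} {r : ℝ}
    (hr : conjFn (iotaInd d) q = (r : EReal)) {u : Euc n} (h : ∀ i, d i ≤ u i) :
    (inner ℝ q u : ℝ) ≤ r := by
  have this : ((inner ℝ q u : ℝ) : EReal) - iotaInd d u ≤ conjFn (iotaInd d) q :=
    le_iSup (fun v : Euc n => ((inner ℝ q v : ℝ) : EReal) - iotaInd d v) u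
  rw [hr] at this
  rw [← EReal.coe_le_coe_iff]
  simpa [iotaInd, h] using this

lemma conj_combo' {n : ℕ} (d : Euc n) {q q' : Euc n} {r r' : ℝ}
    (hr : conjFn (iotaInd d) q = (r : EReal)) (hr' : conjFn (iotaInd d) q' = (r' : EReal))
    {t : ℝ} (ht0 : 0 ≤ t) (ht1 : t ≤ 1) :
    conjFn (iotaInd d) ((1 - t) • q + t • q') ≤ (((1 - t) * r + t * r' : ℝ) : EReal) := by
  refine iSup_le fun u => ?_
  by_cases h : ∀ i, d i ≤ u i
  · simp only [iotaInd, if_pos h, sub_zero]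
    rw [EReal.coe_le_coe_iff]
    have h1 := conj_term_le' d hr h
    have h2 := conj_term_le' d hr' h
    have hcomb : (inner ℝ ((1 - t) • q + t • q') u : ℝ)
        = (1 - t) * (inner ℝ q u : ℝ) + t * (inner ℝ q' u : ℝ) := by
      simp [inner_add_left, real_inner_smul_left, Finset.mul_sum, mul_assoc]
    rw [hcomb]
    have := mul_le_mul_of_nonneg_left h1 (by linarith : (0:ℝ) ≤ 1 - t)
    have := mul_le_mul_of_nonneg_left h2 ht0
    linarith
  · simp [iotaInd, h, EReal.sub_top]

lemma prox_conj_real' {n : ℕ} (d : Euc n) (η : ℝ) (hη : 0 < η) (w q : Euc n)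
    (hq : q ∈ proxSet (fun u => ((η : ℝ) : EReal) * conjFn (iotaInd d) u) w) :
    ∃ r : ℝ, conjFn (iotaInd d) q = (r : EReal) := by
  have h0 := hq 0
  have hz : ((η : ℝ) : EReal) * conjFn (iotaInd d) 0 = 0 := by
    rw [conj_zero']; simp
  simp only [] at h0
  rw [hz, add_zero] at h0
  by_cases ht : conjFn (iotaInd d) q = ⊤
  · exfalso
    have htop : ((η : ℝ) : EReal) * conjFn (iotaInd d) q = ⊤ := by
      rw [ht]; exact EReal.coe_mul_top_of_pos hη
    rw [htop, EReal.add_top_of_ne_bot (EReal.coe_ne_bot _)] at h0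
    exact EReal.coe_ne_top _ (top_le_iff.mp h0)
  · exact ⟨_, (EReal.coe_toReal ht (conj_ne_bot' d q)).symm⟩

lemma ipW_scalar' {m₁ m₂ : ℕ} (β η : ℝ) (D : Matrix (Fin m₂) (Fin m₁) ℝ)
    (z w : Euc m₁ × Euc m₂) :
    ipW β η D z w = (1 / β) * (inner ℝ z.1 w.1 : ℝ) - (inner ℝ z.1 (mVec D.transpose w.2) : ℝ)
      - (inner ℝ z.2 (mVec D w.1) : ℝ) + (1 / η) * (inner ℝ z.2 w.2 : ℝ) := by
  simp only [ipW, Wapp, inner_sub_right, inner_add_right, inner_neg_right,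
    real_inner_smul_right]
  ring

lemma ipW_symm' {m₁ m₂ : ℕ} (β η : ℝ) (D : Matrix (Fin m₂) (Fin m₁) ℝ)
    (z w : Euc m₁ × Euc m₂) : ipW β η D z w = ipW β η D w z := by
  rw [ipW_scalar', ipW_scalar', mVec_adj', mVec_adj',
    real_inner_comm z.1 w.1, real_inner_comm z.2 w.2,
    real_inner_comm (mVec D z.1) w.2, real_inner_comm (mVec D w.1) z.2]
  ring

lemma ipW_comb' {m₁ m₂ : ℕ} (β η : ℝ) (D : Matrix (Fin m₂) (Fin m₁) ℝ)
    (Δ u : Euc m₁ × Euc m₂) :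
    ipW β η D ((2:ℝ) • Δ - u) ((2:ℝ) • Δ - u)
      = 4 * ipW β η D Δ Δ - 4 * ipW β η D Δ u + ipW β η D u u := by
  have hl : ∀ z w w' : Euc m₁ × Euc m₂,
      ipW β η D z (w - w') = ipW β η D z w - ipW β η D z w' := by
    intro z w w'
    have h1 : (w - w').1 = w.1 - w'.1 := rfl
    have h2 : (w - w').2 = w.2 - w'.2 := rfl
    have hm1 : mVec D.transpose (w.2 - w'.2) = mVec D.transpose w.2 - mVec D.transpose w'.2 := by
      ext i; simp [mVec, mul_sub, Finset.sum_sub_distrib]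
    have hm2 : mVec D (w.1 - w'.1) = mVec D w.1 - mVec D w'.1 := by
      ext i; simp [mVec, mul_sub, Finset.sum_sub_distrib]
    rw [ipW_scalar', ipW_scalar', ipW_scalar', h1, h2, hm1, hm2,
      inner_sub_right, inner_sub_right, inner_sub_right, inner_sub_right]
    ring
  have hs : ∀ z w : Euc m₁ × Euc m₂,
      ipW β η D z ((2:ℝ) • w) = 2 * ipW β η D z w := by
    intro z w
    have h1 : ((2:ℝ) • w).1 = (2:ℝ) • w.1 := rfl
    have h2 : ((2:ℝ) • w).2 = (2:ℝ) • w.2 := rfl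
    have hm1 : mVec D.transpose ((2:ℝ) • w.2) = (2:ℝ) • mVec D.transpose w.2 := by
      ext i; simp [mVec, Finset.mul_sum]; congr 1; funext j; ring
    have hm2 : mVec D ((2:ℝ) • w.1) = (2:ℝ) • mVec D w.1 := by
      ext i; simp [mVec, Finset.mul_sum]; congr 1; funext j; ring
    rw [ipW_scalar', ipW_scalar', h1, h2, hm1, hm2,
      real_inner_smul_right, real_inner_smul_right, real_inner_smul_right,
      real_inner_smul_right]
    ring
  have key : ∀ z : Euc m₁ × Euc m₂, ipW β η D ((2:ℝ) • Δ - u) z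
      = 2 * ipW β η D z Δ - ipW β η D z u := by
    intro z
    rw [ipW_symm', hl, hs, ipW_symm' β η D z Δ]
  rw [key, key, key, ipW_symm' β η D u Δ]
  ring

end Helpers

/-- assume λ_min(W) > L/2 (so W is symmetric positive definite).
Then T_G is firmly nonexpansive with respect to W:
‖T_G(x) − T_G(y)‖²_W ≤ ⟨T_G(x) − T_G(y), x − y⟩_W for all x, y; in particular,
T_G is ½-averaged nonexpansive with respect to W.  `TG` is characterized by its
implicit fixed-point property `hTG`. -/
theorem stmt12 {m₁ m₂ : ℕ} (D : Matrix (Fin m₂) (Fin m₁) ℝ) (d : Euc m₂)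
    (g : Euc m₁ → ℝ) (hgconv : ConvexOn ℝ Set.univ g)
    (L : ℝ) (hL : 0 < L)
    (β η : ℝ) (hβ : 0 < β) (hη : 0 < η)
    (TG : Euc m₁ × Euc m₂ → Euc m₁ × Euc m₂)
    (hTG : ∀ w : Euc m₁ × Euc m₂,
      (TG w).1 ∈ proxSet (fun u => ((β * g u : ℝ) : EReal))
          (w.1 - β • mVec D.transpose w.2) ∧
      (TG w).2 ∈ proxSet (fun u => ((η : ℝ) : EReal) * conjFn (iotaInd d) u)
          ((2 * η) • mVec D (TG w).1 - η • mVec D w.1 + w.2))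
    (lammin : ℝ)
    (hlam : IsLeast {μ : ℝ | ∃ z : Euc m₁ × Euc m₂, z ≠ 0 ∧ Wapp β η D z = μ • z} lammin)
    (hgt : L / 2 < lammin) :
    (∀ x y : Euc m₁ × Euc m₂,
      ipW β η D (TG x - TG y) (TG x - TG y) ≤ ipW β η D (TG x - TG y) (x - y)) ∧
    ∃ N : Euc m₁ × Euc m₂ → Euc m₁ × Euc m₂,
      (∀ x y : Euc m₁ × Euc m₂, normW β η D (N x - N y) ≤ normW β η D (x - y)) ∧
      ∀ z : Euc m₁ × Euc m₂, TG z = (1 - (1 / 2 : ℝ)) • z + (1 / 2 : ℝ) • N z := by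
  have firm : ∀ x y : Euc m₁ × Euc m₂,
      ipW β η D (TG x - TG y) (TG x - TG y) ≤ ipW β η D (TG x - TG y) (x - y) := by
    intro x y
    obtain ⟨hpx, hqx⟩ := hTG x
    obtain ⟨hpy, hqy⟩ := hTG y
    set p := (TG x).1 with hp
    set q := (TG x).2 with hq
    set p' := (TG y).1 with hp'
    set q' := (TG y).2 with hq'
    -- first coordinate
    have hconv1 : ∀ (pp uu : Euc m₁), ∀ t : ℝ, 0 < t → t ≤ 1 →
        ((β * g ((1 - t) • pp + t • uu) : ℝ) : EReal)
          ≤ (((1 - t) * (β * g pp) + t * (β * g uu) : ℝ) : EReal) := by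
      intro pp uu t ht0 ht1
      rw [EReal.coe_le_coe_iff]
      have hg := hgconv.2 (Set.mem_univ pp) (Set.mem_univ uu)
        (by linarith : (0:ℝ) ≤ 1 - t) ht0.le (by ring)
      simp only [smul_eq_mul] at hg
      nlinarith [mul_le_mul_of_nonneg_left hg hβ.le]
    have hA1 := prox_subgrad' (fun u => ((β * g u : ℝ) : EReal)) _ p p'
      (β * g p) (β * g p') hpx rfl (fun t ht0 ht1 => hconv1 p p' t ht0 ht1)
    have hA2 := prox_subgrad' (fun u => ((β * g u : ℝ) : EReal)) _ p' p
      (β * g p') (β * g p) hpy rfl (fun t ht0 ht1 => hconv1 p' p t ht0 ht1)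
    have firm1 : (inner ℝ (p - p') (p - p') : ℝ)
        ≤ inner ℝ (p - p')
          ((x.1 - β • mVec D.transpose x.2) - (y.1 - β • mVec D.transpose y.2)) :=
      firm_of_subgrad' _ _ _ _ (by linarith)
    -- second coordinate
    obtain ⟨r, hr⟩ := prox_conj_real' d η hη _ q hqx
    obtain ⟨r', hr'⟩ := prox_conj_real' d η hη _ q' hqy
    have hψq : (fun u => ((η : ℝ) : EReal) * conjFn (iotaInd d) u) q
        = ((η * r : ℝ) : EReal) := by
      simp only; rw [hr, ← EReal.coe_mul]
    have hψq' : (fun u => ((η : ℝ) : EReal) * conjFn (iotaInd d) u) q'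
        = ((η * r' : ℝ) : EReal) := by
      simp only; rw [hr', ← EReal.coe_mul]
    have hconv2 : ∀ (a b : Euc m₂) (ra rb : ℝ),
        conjFn (iotaInd d) a = (ra : EReal) → conjFn (iotaInd d) b = (rb : EReal) →
        ∀ t : ℝ, 0 < t → t ≤ 1 →
        ((η : ℝ) : EReal) * conjFn (iotaInd d) ((1 - t) • a + t • b)
          ≤ (((1 - t) * (η * ra) + t * (η * rb) : ℝ) : EReal) := by
      intro a b ra rb ha hb t ht0 ht1
      have hcc := conj_combo' d ha hb ht0.le ht1
      have hnb := conj_ne_bot' d ((1 - t) • a + t • b)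
      have hnt : conjFn (iotaInd d) ((1 - t) • a + t • b) ≠ ⊤ := by
        intro h; rw [h] at hcc; exact EReal.coe_ne_top _ (top_le_iff.mp hcc)
      have hse : conjFn (iotaInd d) ((1 - t) • a + t • b)
          = ((conjFn (iotaInd d) ((1 - t) • a + t • b)).toReal : EReal) :=
        (EReal.coe_toReal hnt hnb).symm
      set s := (conjFn (iotaInd d) ((1 - t) • a + t • b)).toReal with hsdef
      rw [hse] at hcc ⊢
      rw [EReal.coe_le_coe_iff] at hcc
      rw [← EReal.coe_mul, EReal.coe_le_coe_iff]
      nlinarith [mul_le_mul_of_nonneg_left hcc hη.le]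
    have hB1 := prox_subgrad' (fun u => ((η : ℝ) : EReal) * conjFn (iotaInd d) u) _ q q'
      (η * r) (η * r') hqx hψq (hconv2 q q' r r' hr hr')
    have hB2 := prox_subgrad' (fun u => ((η : ℝ) : EReal) * conjFn (iotaInd d) u) _ q' q
      (η * r') (η * r) hqy hψq' (hconv2 q' q r' r hr' hr)
    have firm2 : (inner ℝ (q - q') (q - q') : ℝ)
        ≤ inner ℝ (q - q')
          (((2 * η) • mVec D p - η • mVec D x.1 + x.2)
            - ((2 * η) • mVec D p' - η • mVec D y.1 + y.2)) :=
      firm_of_subgrad' _ _ _ _ (by linarith)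
    -- assemble
    have hdiff1 : (x.1 - β • mVec D.transpose x.2) - (y.1 - β • mVec D.transpose y.2)
        = (x.1 - y.1) - β • mVec D.transpose (x.2 - y.2) := by
      rw [mVec_sub']; module
    have hdiff2 : ((2 * η) • mVec D p - η • mVec D x.1 + x.2)
          - ((2 * η) • mVec D p' - η • mVec D y.1 + y.2)
        = (2 * η) • mVec D (p - p') - η • mVec D (x.1 - y.1) + (x.2 - y.2) := by
      rw [mVec_sub', mVec_sub']; module
    rw [hdiff1] at firm1
    rw [hdiff2] at firm2
    have e1a : (inner ℝ (p - p') (x.1 - y.1 - β • mVec D.transpose (x.2 - y.2)) : ℝ)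
        = (inner ℝ (p - p') (x.1 - y.1) : ℝ)
          - β * (inner ℝ (p - p') (mVec D.transpose (x.2 - y.2)) : ℝ) := by
      simp only [inner_sub_right, real_inner_smul_right]
    have f1 : (inner ℝ (p - p') (p - p') : ℝ)
        ≤ (inner ℝ (p - p') (x.1 - y.1) : ℝ)
          - β * (inner ℝ (p - p') (mVec D.transpose (x.2 - y.2)) : ℝ) := by
      rw [e1a] at firm1; exact firm1
    have f2 : (inner ℝ (q - q') (q - q') : ℝ)
        ≤ 2 * η * (inner ℝ (q - q') (mVec D (p - p')) : ℝ)
          - η * (inner ℝ (q - q') (mVec D (x.1 - y.1)) : ℝ)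
          + (inner ℝ (q - q') (x.2 - y.2) : ℝ) := by
      have e2a : (inner ℝ (q - q')
            ((2 * η) • mVec D (p - p') - η • mVec D (x.1 - y.1) + (x.2 - y.2)) : ℝ)
          = 2 * η * (inner ℝ (q - q') (mVec D (p - p')) : ℝ)
            - η * (inner ℝ (q - q') (mVec D (x.1 - y.1)) : ℝ)
            + (inner ℝ (q - q') (x.2 - y.2) : ℝ) := by
        simp only [inner_add_right, inner_sub_right, real_inner_smul_right]
      rw [e2a] at firm2; exact firm2
    have hadj : (inner ℝ (p - p') (mVec D.transpose (q - q')) : ℝ)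
        = inner ℝ (q - q') (mVec D (p - p')) := by
      rw [mVec_adj']; exact real_inner_comm _ _
    have hc1 : (TG x - TG y).1 = p - p' := rfl
    have hc2 : (TG x - TG y).2 = q - q' := rfl
    have hc3 : (x - y).1 = x.1 - y.1 := rfl
    have hc4 : (x - y).2 = x.2 - y.2 := rfl
    rw [ipW_scalar', ipW_scalar', hc1, hc2, hc3, hc4]
    have h1' : (1 / β) * (inner ℝ (p - p') (p - p') : ℝ)
        ≤ (1 / β) * (inner ℝ (p - p') (x.1 - y.1) : ℝ)
          - (inner ℝ (p - p') (mVec D.transpose (x.2 - y.2)) : ℝ) := by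
      have h := mul_le_mul_of_nonneg_left f1 (by positivity : (0:ℝ) ≤ 1 / β)
      calc (1 / β) * (inner ℝ (p - p') (p - p') : ℝ)
          ≤ (1 / β) * ((inner ℝ (p - p') (x.1 - y.1) : ℝ)
            - β * (inner ℝ (p - p') (mVec D.transpose (x.2 - y.2)) : ℝ)) := h
        _ = (1 / β) * (inner ℝ (p - p') (x.1 - y.1) : ℝ)
            - (inner ℝ (p - p') (mVec D.transpose (x.2 - y.2)) : ℝ) := by
          field_simp
    have h2' : (1 / η) * (inner ℝ (q - q') (q - q') : ℝ)
        ≤ 2 * (inner ℝ (q - q') (mVec D (p - p')) : ℝ)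
          - (inner ℝ (q - q') (mVec D (x.1 - y.1)) : ℝ)
          + (1 / η) * (inner ℝ (q - q') (x.2 - y.2) : ℝ) := by
      have h := mul_le_mul_of_nonneg_left f2 (by positivity : (0:ℝ) ≤ 1 / η)
      calc (1 / η) * (inner ℝ (q - q') (q - q') : ℝ)
          ≤ (1 / η) * (2 * η * (inner ℝ (q - q') (mVec D (p - p')) : ℝ)
            - η * (inner ℝ (q - q') (mVec D (x.1 - y.1)) : ℝ)
            + (inner ℝ (q - q') (x.2 - y.2) : ℝ)) := h
        _ = 2 * (inner ℝ (q - q') (mVec D (p - p')) : ℝ)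
            - (inner ℝ (q - q') (mVec D (x.1 - y.1)) : ℝ)
            + (1 / η) * (inner ℝ (q - q') (x.2 - y.2) : ℝ) := by
          field_simp
    linarith [h1', h2', hadj]
  refine ⟨firm, fun z => (2:ℝ) • TG z - z, fun x y => ?_, fun z => ?_⟩
  · unfold normW
    apply Real.sqrt_le_sqrt
    have hNd : ((2:ℝ) • TG x - x) - ((2:ℝ) • TG y - y)
        = (2:ℝ) • (TG x - TG y) - (x - y) := by module
    rw [hNd, ipW_comb']
    have := firm x y
    linarith
  · show TG z = (1 - (1 / 2 : ℝ)) • z + (1 / 2 : ℝ) • ((2:ℝ) • TG z - z)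
    module
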